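/- Let p and q be coprime integers with p > q > 1 and p ≤ 2q−1. Then {ρ(w) : w labels a branch of T_{p/q} from 0} = {ρ(w) : w labels a branch of S_{p/q} from 0}. -/

import Mathlib

/-- `w` labels a branch of the base-p/q automaton with digit set `E` from state `n`:
there are states `s 0 = n, s 1, s 2, …` with `q·s(k+1) = p·s k + w k` and `w k ∈ E`. -/
def IsBranch (p q : ℕ) (E : Set ℤ) (n : ℕ) (w : ℕ → ℤ) : Prop :=
  ∃ s : ℕ → ℕ, s 0 = n ∧ ∀ k : ℕ, (q : ℤ) * s (k + 1) = p * s k + w k ∧ w k ∈ E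

/-- `u` (a word of length `ℓ`) labels a path from `n` to `m` in the base-p/q automaton
with digit set `E`. -/
def IsPath (p q : ℕ) (E : Set ℤ) (n m ℓ : ℕ) (u : ℕ → ℤ) : Prop :=
  ∃ s : ℕ → ℕ, s 0 = n ∧ s ℓ = m ∧
    ∀ k < ℓ, (q : ℤ) * s (k + 1) = p * s k + u k ∧ u k ∈ E

/-- The canonical digit alphabet `A_p = {0, 1, …, p−1}`. -/
def Ap (p : ℕ) : Set ℤ := Set.Icc 0 ((p : ℤ) - 1)

/-- The lower alphabet `{0, 1, …, q−1}`. -/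
def LowAlph (q : ℕ) : Set ℤ := Set.Icc 0 ((q : ℤ) - 1)

/-- The upper alphabet `{p−q, …, p−1}`. -/
def UpAlph (p q : ℕ) : Set ℤ := Set.Icc ((p : ℤ) - q) ((p : ℤ) - 1)

/-- The alphabet `D = {p−2q+1, …, p−1}` of the automaton `S_{p/q}`. -/
def Dalph (p q : ℕ) : Set ℤ := Set.Icc ((p : ℤ) - 2 * q + 1) ((p : ℤ) - 1)

/-- Evaluation after the radix point: `ρ(w) = Σ_{i≥1} (w_i/q)·(q/p)^i`
(here `w k` is the `(k+1)`-st digit). -/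
noncomputable def rho (p q : ℕ) (w : ℕ → ℤ) : ℝ :=
  ∑' i : ℕ, ((w i : ℝ) / q) * ((q : ℝ) / p) ^ (i + 1)


open Filter Topology Finset

namespace S13

/-! Nat-level orbit machinery -/

def hi (p q m : ℕ) : ℕ := (p * m + p - 1) / q
def lo (p q m : ℕ) : ℕ := (p * m + q - 1) / q

def maxo (p q n : ℕ) : ℕ → ℕ
  | 0 => n
  | k+1 => hi p q (maxo p q n k)

def mino (p q n : ℕ) : ℕ → ℕ
  | 0 => n
  | k+1 => lo p q (mino p q n k)

section NatLemmas

variable {p q : ℕ} (hq : 1 < q) (hpq : q < p)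

include hq in
lemma div_facts (A : ℕ) : q * (A / q) ≤ A ∧ A < q * (A / q) + q := by
  have h1 := Nat.div_add_mod A q
  have h2 := Nat.mod_lt A (by omega : 0 < q)
  omega

include hq in
lemma q_lo_ge (m : ℕ) : p * m ≤ q * lo p q m := by
  have h := div_facts hq (p * m + q - 1)
  unfold lo; omega

include hq in
lemma q_lo_le (m : ℕ) : q * lo p q m ≤ p * m + q - 1 := by
  have h := div_facts hq (p * m + q - 1)
  unfold lo; omega

include hq in
lemma q_hi_le (m : ℕ) : q * hi p q m ≤ p * m + p - 1 := by
  have h := div_facts hq (p * m + p - 1)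
  unfold hi; omega

include hq in
lemma q_hi_ge (m : ℕ) : p * m + p ≤ q * hi p q m + q := by
  have h := div_facts hq (p * m + p - 1)
  unfold hi; omega

include hpq in
lemma lo_le_hi (m : ℕ) : lo p q m ≤ hi p q m :=
  Nat.div_le_div_right (by omega)

lemma hi_mono : Monotone (hi p q) := fun a b h =>
  Nat.div_le_div_right (by have := Nat.mul_le_mul_left p h; omega)

lemma lo_mono : Monotone (lo p q) := fun a b h =>
  Nat.div_le_div_right (by have := Nat.mul_le_mul_left p h; omega)

lemma maxo_shift (n : ℕ) : ∀ k, maxo p q n (k+1) = maxo p q (hi p q n) k := by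
  intro k; induction k with
  | zero => rfl
  | succ k ih => show hi p q _ = hi p q _; rw [ih]

lemma mino_shift (n : ℕ) : ∀ k, mino p q n (k+1) = mino p q (lo p q n) k := by
  intro k; induction k with
  | zero => rfl
  | succ k ih => show lo p q _ = lo p q _; rw [ih]

lemma maxo_mono_state {a b : ℕ} (h : a ≤ b) : ∀ k, maxo p q a k ≤ maxo p q b k := by
  intro k; induction k with
  | zero => exact h
  | succ k ih => exact hi_mono ih

include hq hpq in
lemma mino_succ_le (t : ℕ) : ∀ k, mino p q (t+1) k ≤ maxo p q t k + 1 := by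
  intro k; induction k with
  | zero => rfl
  | succ k ih =>
    show lo p q _ ≤ hi p q _ + 1
    calc lo p q (mino p q (t+1) k) ≤ lo p q (maxo p q t k + 1) := lo_mono ih
      _ ≤ hi p q (maxo p q t k) + 1 := by
        unfold lo hi
        have e : p * (maxo p q t k + 1) = p * maxo p q t k + p := by ring
        have h1 : p * (maxo p q t k + 1) + q - 1 = (p * maxo p q t k + p - 1) + q := by
          omega
        rw [h1, Nat.add_div_right _ (by omega : 0 < q)]

include hq in
lemma mino_zero : ∀ k, mino p q 0 k = 0 := by
  intro k; induction k with
  | zero => rfl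
  | succ k ih =>
    show lo p q _ = 0
    rw [ih]; unfold lo
    exact Nat.div_eq_of_lt (by omega)

end NatLemmas

/-! Real valuations -/

noncomputable def rr (p q : ℕ) : ℝ := (q : ℝ) / p

section RealLemmas

variable {p q : ℕ} (hq : 1 < q) (hpq : q < p)

include hq hpq

lemma q_pos : (0:ℝ) < q := by exact_mod_cast (show 0 < q by omega)
lemma p_pos : (0:ℝ) < p := by exact_mod_cast (show 0 < p by omega)

lemma rr_pos : 0 < rr p q := div_pos (q_pos hq hpq) (p_pos hq hpq)

lemma rr_lt_one : rr p q < 1 := by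
  rw [rr, div_lt_one (p_pos hq hpq)]
  exact_mod_cast hpq

lemma seq_mono {u : ℕ → ℕ} (h : ∀ k, p * u k ≤ q * u (k+1)) :
    Monotone fun k => (u k : ℝ) * rr p q ^ k := by
  apply monotone_nat_of_le_succ
  intro k
  have hp := p_pos hq hpq
  have hr := rr_pos hq hpq
  have h1 : (p:ℝ) * u k ≤ q * u (k+1) := by exact_mod_cast h k
  have h2 : (u k : ℝ) ≤ u (k+1) * rr p q := by
    rw [rr]
    rw [mul_div_assoc']
    rw [le_div_iff₀ hp]
    nlinarith
  calc (u k : ℝ) * rr p q ^ k ≤ (u (k+1) * rr p q) * rr p q ^ k :=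
        mul_le_mul_of_nonneg_right h2 (by positivity)
    _ = u (k+1) * rr p q ^ (k+1) := by ring

lemma seq_bdd {u : ℕ → ℕ} {c : ℝ} (hc : 0 ≤ c)
    (h : ∀ k, (q:ℝ) * u (k+1) ≤ p * u k + c) :
    ∀ k, (u k : ℝ) * rr p q ^ k ≤ u 0 + c / (p - q) * (1 - rr p q ^ k) := by
  have hp := p_pos hq hpq
  have hq' := q_pos hq hpq
  have hr0 := rr_pos hq hpq
  have hr1 := rr_lt_one hq hpq
  have hpq' : (0:ℝ) < (p:ℝ) - q := by
    have : (q:ℝ) < p := by exact_mod_cast hpq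
    linarith
  have key : ∀ k, (u (k+1) : ℝ) * rr p q ^ (k+1) ≤ u k * rr p q ^ k + (c/q) * rr p q ^ (k+1) := by
    intro k
    have h1 := h k
    have hrk : (0:ℝ) < rr p q ^ (k+1) := by positivity
    have h2 : (u (k+1) : ℝ) ≤ (p * u k + c) / q := by
      rw [le_div_iff₀ hq']; linarith
    calc (u (k+1) : ℝ) * rr p q ^ (k+1) ≤ ((p * u k + c) / q) * rr p q ^ (k+1) :=
          mul_le_mul_of_nonneg_right h2 (le_of_lt hrk)
      _ = u k * ((p/q) * rr p q ^ (k+1)) + (c/q) * rr p q ^ (k+1) := by ring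
      _ = u k * rr p q ^ k + (c/q) * rr p q ^ (k+1) := by
          rw [rr]; rw [pow_succ]
          field_simp
  intro k; induction k with
  | zero => simp
  | succ k ih =>
    have hK : c / (p - q) * (rr p q ^ k - rr p q ^ (k+1)) = (c/q) * rr p q ^ (k+1) := by
      rw [rr]
      rw [pow_succ]
      field_simp
    calc (u (k+1) : ℝ) * rr p q ^ (k+1)
        ≤ u k * rr p q ^ k + (c/q) * rr p q ^ (k+1) := key k
      _ ≤ u 0 + c / (p - q) * (1 - rr p q ^ k) + (c/q) * rr p q ^ (k+1) := by linarith [ih]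
      _ = u 0 + c / (p - q) * (1 - rr p q ^ (k+1)) := by rw [← hK]; ring

end RealLemmas

noncomputable def vmax (p q n : ℕ) : ℝ := ⨆ k, (maxo p q n k : ℝ) * rr p q ^ k
noncomputable def vmin (p q n : ℕ) : ℝ := ⨆ k, (mino p q n k : ℝ) * rr p q ^ k

section VLemmas

variable {p q : ℕ} (hq : 1 < q) (hpq : q < p)

include hq hpq

lemma maxo_step_real (n k : ℕ) :
    (q:ℝ) * maxo p q n (k+1) ≤ p * maxo p q n k + ((p:ℝ) - 1) := by
  have h := q_hi_le hq (p := p) (maxo p q n k)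
  have h' : (q:ℝ) * hi p q (maxo p q n k) ≤ (p * maxo p q n k + p - 1 : ℕ) := by
    exact_mod_cast h
  have hc : ((p * maxo p q n k + p - 1 : ℕ) : ℝ) = p * maxo p q n k + (p:ℝ) - 1 := by
    have : 1 ≤ p := by omega
    push_cast [Nat.cast_sub (by omega : 1 ≤ p * maxo p q n k + p)]
    ring
  calc (q:ℝ) * maxo p q n (k+1) = (q:ℝ) * hi p q (maxo p q n k) := rfl
    _ ≤ p * maxo p q n k + (p:ℝ) - 1 := by rw [hc] at h'; exact h'
    _ = p * maxo p q n k + ((p:ℝ) - 1) := by ring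

lemma mino_step_real (n k : ℕ) :
    (q:ℝ) * mino p q n (k+1) ≤ p * mino p q n k + ((q:ℝ) - 1) := by
  have h := q_lo_le hq (p := p) (mino p q n k)
  have h' : (q:ℝ) * lo p q (mino p q n k) ≤ (p * mino p q n k + q - 1 : ℕ) := by
    exact_mod_cast h
  have hc : ((p * mino p q n k + q - 1 : ℕ) : ℝ) = p * mino p q n k + (q:ℝ) - 1 := by
    push_cast [Nat.cast_sub (by omega : 1 ≤ p * mino p q n k + q)]
    ring
  calc (q:ℝ) * mino p q n (k+1) = (q:ℝ) * lo p q (mino p q n k) := rfl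
    _ ≤ p * mino p q n k + (q:ℝ) - 1 := by rw [hc] at h'; exact h'
    _ = p * mino p q n k + ((q:ℝ) - 1) := by ring

lemma maxo_seq_mono (n : ℕ) : Monotone fun k => (maxo p q n k : ℝ) * rr p q ^ k := by
  apply seq_mono hq hpq
  intro k
  have := q_hi_ge hq (p := p) (maxo p q n k)
  show p * maxo p q n k ≤ q * hi p q (maxo p q n k)
  omega

lemma mino_seq_mono (n : ℕ) : Monotone fun k => (mino p q n k : ℝ) * rr p q ^ k := by
  apply seq_mono hq hpq
  intro k
  have := q_lo_ge hq (p := p) (mino p q n k)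
  exact this

lemma maxo_seq_bdd (n : ℕ) : ∀ k,
    (maxo p q n k : ℝ) * rr p q ^ k ≤ n + ((p:ℝ) - 1) / (p - q) := by
  intro k
  have h := seq_bdd hq hpq (u := maxo p q n) (c := (p:ℝ) - 1)
    (by
      have h1 : (1:ℝ) ≤ p := by exact_mod_cast (show 1 ≤ p by omega)
      linarith)
    (maxo_step_real hq hpq n) k
  have hr0 := rr_pos hq hpq
  have hpq' : (0:ℝ) < (p:ℝ) - q := by
    have : (q:ℝ) < p := by exact_mod_cast hpq
    linarith
  have hp1 : (0:ℝ) ≤ (p:ℝ) - 1 := by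
    have : (1:ℝ) ≤ p := by exact_mod_cast (by omega : 1 ≤ p)
    linarith
  have : ((p:ℝ) - 1) / (p - q) * (1 - rr p q ^ k) ≤ ((p:ℝ) - 1) / (p - q) := by
    have h1 : (0:ℝ) ≤ ((p:ℝ) - 1) / (p - q) := by positivity
    nlinarith [pow_nonneg (le_of_lt hr0) k]
  calc (maxo p q n k : ℝ) * rr p q ^ k
      ≤ (maxo p q n 0 : ℝ) + ((p:ℝ) - 1) / (p - q) * (1 - rr p q ^ k) := h
    _ ≤ n + ((p:ℝ) - 1) / (p - q) := by
        have : maxo p q n 0 = n := rfl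
        rw [this]; linarith

lemma maxo_bddAbove (n : ℕ) :
    BddAbove (Set.range fun k => (maxo p q n k : ℝ) * rr p q ^ k) := by
  refine ⟨n + ((p:ℝ) - 1) / (p - q), ?_⟩
  rintro x ⟨k, rfl⟩
  exact maxo_seq_bdd hq hpq n k

lemma mino_seq_bdd (n : ℕ) : ∀ k,
    (mino p q n k : ℝ) * rr p q ^ k ≤ n + ((q:ℝ) - 1) / (p - q) := by
  intro k
  have h := seq_bdd hq hpq (u := mino p q n) (c := (q:ℝ) - 1)
    (by
      have h1 : (1:ℝ) ≤ q := by exact_mod_cast (show 1 ≤ q by omega)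
      linarith)
    (mino_step_real hq hpq n) k
  have hr0 := rr_pos hq hpq
  have hpq' : (0:ℝ) < (p:ℝ) - q := by
    have : (q:ℝ) < p := by exact_mod_cast hpq
    linarith
  have hp1 : (0:ℝ) ≤ (q:ℝ) - 1 := by
    have : (1:ℝ) ≤ q := by exact_mod_cast (by omega : 1 ≤ q)
    linarith
  have : ((q:ℝ) - 1) / (p - q) * (1 - rr p q ^ k) ≤ ((q:ℝ) - 1) / (p - q) := by
    have h1 : (0:ℝ) ≤ ((q:ℝ) - 1) / (p - q) := by positivity
    nlinarith [pow_nonneg (le_of_lt hr0) k]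
  calc (mino p q n k : ℝ) * rr p q ^ k
      ≤ (mino p q n 0 : ℝ) + ((q:ℝ) - 1) / (p - q) * (1 - rr p q ^ k) := h
    _ ≤ n + ((q:ℝ) - 1) / (p - q) := by
        have : mino p q n 0 = n := rfl
        rw [this]; linarith

lemma mino_bddAbove (n : ℕ) :
    BddAbove (Set.range fun k => (mino p q n k : ℝ) * rr p q ^ k) := by
  refine ⟨n + ((q:ℝ) - 1) / (p - q), ?_⟩
  rintro x ⟨k, rfl⟩
  exact mino_seq_bdd hq hpq n k

lemma vmax_tendsto (n : ℕ) :
    Tendsto (fun k => (maxo p q n k : ℝ) * rr p q ^ k) atTop (𝓝 (vmax p q n)) :=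
  tendsto_atTop_ciSup (maxo_seq_mono hq hpq n) (maxo_bddAbove hq hpq n)

lemma vmin_tendsto (n : ℕ) :
    Tendsto (fun k => (mino p q n k : ℝ) * rr p q ^ k) atTop (𝓝 (vmin p q n)) :=
  tendsto_atTop_ciSup (mino_seq_mono hq hpq n) (mino_bddAbove hq hpq n)

lemma vmax_ge (n : ℕ) : (n:ℝ) ≤ vmax p q n := by
  have := le_ciSup (f := fun k => (maxo p q n k : ℝ) * rr p q ^ k)
    (maxo_bddAbove hq hpq n) 0
  simpa [vmax, maxo] using this

lemma vmin_ge (n : ℕ) : (n:ℝ) ≤ vmin p q n := by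
  have := le_ciSup (f := fun k => (mino p q n k : ℝ) * rr p q ^ k)
    (mino_bddAbove hq hpq n) 0
  simpa [vmin, mino] using this

lemma vmax_le (n : ℕ) : vmax p q n ≤ n + ((p:ℝ) - 1) / (p - q) :=
  ciSup_le (maxo_seq_bdd hq hpq n)

lemma vmax_shift (n : ℕ) : vmax p q n = rr p q * vmax p q (hi p q n) := by
  have h1 := (vmax_tendsto hq hpq n).comp (tendsto_add_atTop_nat 1)
  have h2 : (fun k => (maxo p q n (k+1) : ℝ) * rr p q ^ (k+1))
      = fun k => rr p q * ((maxo p q (hi p q n) k : ℝ) * rr p q ^ k) := by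
    funext k
    rw [maxo_shift]
    ring
  have h3 : Tendsto (fun k => rr p q * ((maxo p q (hi p q n) k : ℝ) * rr p q ^ k)) atTop
      (𝓝 (rr p q * vmax p q (hi p q n))) :=
    (vmax_tendsto hq hpq (hi p q n)).const_mul _
  exact tendsto_nhds_unique (h2 ▸ h1) h3

lemma vmin_shift (n : ℕ) : vmin p q n = rr p q * vmin p q (lo p q n) := by
  have h1 := (vmin_tendsto hq hpq n).comp (tendsto_add_atTop_nat 1)
  have h2 : (fun k => (mino p q n (k+1) : ℝ) * rr p q ^ (k+1))
      = fun k => rr p q * ((mino p q (lo p q n) k : ℝ) * rr p q ^ k) := by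
    funext k
    rw [mino_shift]
    ring
  have h3 : Tendsto (fun k => rr p q * ((mino p q (lo p q n) k : ℝ) * rr p q ^ k)) atTop
      (𝓝 (rr p q * vmin p q (lo p q n))) :=
    (vmin_tendsto hq hpq (lo p q n)).const_mul _
  exact tendsto_nhds_unique (h2 ▸ h1) h3

lemma vmin_succ_le_vmax (t : ℕ) : vmin p q (t+1) ≤ vmax p q t := by
  have hr0 := rr_pos hq hpq
  have hr1 := rr_lt_one hq hpq
  have h1 := vmin_tendsto hq hpq (t+1)
  have h2 : Tendsto (fun k => (maxo p q t k : ℝ) * rr p q ^ k + rr p q ^ k) atTop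
      (𝓝 (vmax p q t + 0)) :=
    (vmax_tendsto hq hpq t).add (tendsto_pow_atTop_nhds_zero_of_lt_one (le_of_lt hr0) hr1)
  rw [add_zero] at h2
  refine le_of_tendsto_of_tendsto' h1 h2 ?_
  intro k
  have h3 : (mino p q (t+1) k : ℝ) ≤ maxo p q t k + 1 := by
    exact_mod_cast mino_succ_le hq hpq t k
  have h4 : (0:ℝ) ≤ rr p q ^ k := by positivity
  nlinarith

lemma vmin_zero : vmin p q 0 = 0 := by
  have h : (fun k => (mino p q 0 k : ℝ) * rr p q ^ k) = fun _ => (0:ℝ) := by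
    funext k
    rw [mino_zero hq]
    simp
  rw [vmin, h]
  exact ciSup_const

end VLemmas

/-! Greedy construction -/

noncomputable def pick (p q m : ℕ) (y : ℝ) : ℕ :=
  sSup {t | lo p q m ≤ t ∧ t ≤ hi p q m ∧ vmin p q t ≤ y}

noncomputable def greedy (p q : ℕ) (x : ℝ) : ℕ → ℕ
  | 0 => 0
  | k+1 => pick p q (greedy p q x k) (x / rr p q ^ (k+1))

section GreedyLemmas

variable {p q : ℕ} (hq : 1 < q) (hpq : q < p)

include hq hpq

lemma pick_spec (m : ℕ) (y : ℝ) (hy1 : vmin p q m ≤ rr p q * y)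
    (hy2 : rr p q * y ≤ vmax p q m) :
    lo p q m ≤ pick p q m y ∧ pick p q m y ≤ hi p q m ∧
      vmin p q (pick p q m y) ≤ y ∧ y ≤ vmax p q (pick p q m y) := by
  have hr0 := rr_pos hq hpq
  set S : Set ℕ := {t | lo p q m ≤ t ∧ t ≤ hi p q m ∧ vmin p q t ≤ y} with hS
  have hlo : lo p q m ∈ S := by
    refine ⟨le_refl _, lo_le_hi hpq m, ?_⟩
    have h := vmin_shift hq hpq m
    -- vmin m = rr * vmin (lo m) ≤ rr * y  =>  vmin (lo m) ≤ y
    rw [h] at hy1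
    exact le_of_mul_le_mul_left hy1 hr0
  have hbdd : BddAbove S := ⟨hi p q m, fun t ht => ht.2.1⟩
  have hmem : pick p q m y ∈ S := Nat.sSup_mem ⟨_, hlo⟩ hbdd
  refine ⟨hmem.1, hmem.2.1, hmem.2.2, ?_⟩
  rcases eq_or_lt_of_le hmem.2.1 with heq | hlt
  · -- pick = hi : use vmax shift
    have h := vmax_shift hq hpq m
    rw [h] at hy2
    have := le_of_mul_le_mul_left hy2 hr0
    rw [heq]
    exact this
  · -- pick < hi : pick+1 not in S
    have hnot : pick p q m y + 1 ∉ S := by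
      intro hmem'
      have h := le_csSup hbdd hmem'
      have he : sSup S = pick p q m y := rfl
      rw [he] at h
      omega
    have h1 : ¬ vmin p q (pick p q m y + 1) ≤ y := by
      intro hv
      exact hnot ⟨le_trans hmem.1 (Nat.le_succ _), hlt, hv⟩
    push_neg at h1
    exact le_trans (le_of_lt h1) (vmin_succ_le_vmax hq hpq _)

lemma greedy_invariant (x : ℝ) (hx0 : 0 ≤ x) (hxL : x ≤ vmax p q 0) :
    ∀ k, vmin p q (greedy p q x k) ≤ x / rr p q ^ k ∧
         x / rr p q ^ k ≤ vmax p q (greedy p q x k) := by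
  have hr0 := rr_pos hq hpq
  intro k; induction k with
  | zero =>
    constructor
    · simp [greedy, vmin_zero hq hpq, hx0]
    · simpa [greedy] using hxL
  | succ k ih =>
    have hrk : (0:ℝ) < rr p q ^ k := by positivity
    have hkey : rr p q * (x / rr p q ^ (k+1)) = x / rr p q ^ k := by
      rw [pow_succ]
      field_simp
    have h := pick_spec hq hpq (greedy p q x k) (x / rr p q ^ (k+1))
      (by rw [hkey]; exact ih.1) (by rw [hkey]; exact ih.2)
    exact ⟨h.2.2.1, h.2.2.2⟩

lemma greedy_trans (x : ℝ) (hx0 : 0 ≤ x) (hxL : x ≤ vmax p q 0) (k : ℕ) :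
    p * greedy p q x k ≤ q * greedy p q x (k+1) ∧
      q * greedy p q x (k+1) ≤ p * greedy p q x k + p - 1 := by
  have hr0 := rr_pos hq hpq
  have hrk : (0:ℝ) < rr p q ^ k := by positivity
  have hkey : rr p q * (x / rr p q ^ (k+1)) = x / rr p q ^ k := by
    rw [pow_succ]; field_simp
  have ih := greedy_invariant hq hpq x hx0 hxL k
  have h := pick_spec hq hpq (greedy p q x k) (x / rr p q ^ (k+1))
    (by rw [hkey]; exact ih.1) (by rw [hkey]; exact ih.2)
  have h1 : lo p q (greedy p q x k) ≤ greedy p q x (k+1) := h.1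
  have h2 : greedy p q x (k+1) ≤ hi p q (greedy p q x k) := h.2.1
  have h3 := q_lo_ge hq (p := p) (greedy p q x k)
  have h4 := q_hi_le hq (p := p) (greedy p q x k)
  have h5 : q * lo p q (greedy p q x k) ≤ q * greedy p q x (k+1) :=
    Nat.mul_le_mul_left q h1
  have h6 : q * greedy p q x (k+1) ≤ q * hi p q (greedy p q x k) :=
    Nat.mul_le_mul_left q h2
  omega

lemma greedy_tendsto (x : ℝ) (hx0 : 0 ≤ x) (hxL : x ≤ vmax p q 0) :
    Tendsto (fun k => (greedy p q x k : ℝ) * rr p q ^ k) atTop (𝓝 x) := by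
  have hr0 := rr_pos hq hpq
  have hr1 := rr_lt_one hq hpq
  set C : ℝ := ((p:ℝ) - 1) / (p - q) with hC
  have hC0 : 0 ≤ C := by
    have h1 : (1:ℝ) ≤ p := by exact_mod_cast (by omega : 1 ≤ p)
    have h2 : (q:ℝ) < p := by exact_mod_cast hpq
    rw [hC]; exact div_nonneg (by linarith) (by linarith)
  have hbound : ∀ k, x - C * rr p q ^ k ≤ (greedy p q x k : ℝ) * rr p q ^ k ∧
      (greedy p q x k : ℝ) * rr p q ^ k ≤ x := by
    intro k
    have hrk : (0:ℝ) < rr p q ^ k := by positivity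
    have inv := greedy_invariant hq hpq x hx0 hxL k
    have hlow : (greedy p q x k : ℝ) ≤ x / rr p q ^ k :=
      le_trans (vmin_ge hq hpq _) inv.1
    have hhigh : x / rr p q ^ k ≤ greedy p q x k + C :=
      le_trans inv.2 (vmax_le hq hpq _)
    constructor
    · have := mul_le_mul_of_nonneg_right hhigh (le_of_lt hrk)
      rw [div_mul_cancel₀ _ (ne_of_gt hrk)] at this
      nlinarith
    · have := mul_le_mul_of_nonneg_right hlow (le_of_lt hrk)
      rw [div_mul_cancel₀ _ (ne_of_gt hrk)] at this
      exact this
  have hlowlim : Tendsto (fun k => x - C * rr p q ^ k) atTop (𝓝 x) := by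
    have h1 : Tendsto (fun k : ℕ => rr p q ^ k) atTop (𝓝 0) :=
      tendsto_pow_atTop_nhds_zero_of_lt_one (le_of_lt hr0) hr1
    have h2 := (h1.const_mul C).const_sub x
    simpa using h2
  exact tendsto_of_tendsto_of_tendsto_of_le_of_le hlowlim tendsto_const_nhds
    (fun k => (hbound k).1) (fun k => (hbound k).2)

end GreedyLemmas

/-! Connecting rho and state limits -/

section RhoLemmas

variable {p q : ℕ} (hq : 1 < q) (hpq : q < p)

include hq hpq

lemma partial_sum_eq {w : ℕ → ℤ} {s : ℕ → ℕ}
    (hs : ∀ k, (q:ℤ) * s (k+1) = p * s k + w k) :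
    ∀ N, ∑ i ∈ Finset.range N, ((w i : ℝ) / q) * rr p q ^ (i+1)
      = (s N : ℝ) * rr p q ^ N - s 0 := by
  have hp0 : (p:ℝ) ≠ 0 := by
    have : (0:ℝ) < p := p_pos hq hpq
    linarith
  have hq0 : (q:ℝ) ≠ 0 := by
    have : (0:ℝ) < q := q_pos hq hpq
    linarith
  intro N; induction N with
  | zero => simp
  | succ N ih =>
    rw [Finset.sum_range_succ, ih]
    have hcast : (q:ℝ) * s (N+1) = p * s N + (w N : ℝ) := by exact_mod_cast hs N
    have hw : (w N : ℝ) = q * s (N+1) - p * s N := by linarith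
    have hident : ((w N : ℝ) / q) * rr p q ^ (N+1)
        = (s (N+1) : ℝ) * rr p q ^ (N+1) - s N * rr p q ^ N := by
      rw [hw, rr, pow_succ]
      field_simp
    rw [hident]
    ring

lemma rho_summable {w : ℕ → ℤ} {B : ℝ} (hB : 0 ≤ B) (hw : ∀ k, |(w k : ℝ)| ≤ B) :
    Summable fun i => ((w i : ℝ) / q) * rr p q ^ (i+1) := by
  have hr0 := rr_pos hq hpq
  have hr1 := rr_lt_one hq hpq
  have hq0 : (0:ℝ) < q := q_pos hq hpq
  apply Summable.of_norm_bounded (g := fun i => (B / q * rr p q) * rr p q ^ i)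
    (((summable_geometric_of_lt_one (le_of_lt hr0) hr1).mul_left _))
  intro i
  rw [Real.norm_eq_abs, abs_mul, abs_div, abs_pow, abs_of_pos hr0, abs_of_pos hq0]
  rw [pow_succ]
  have h1 : |(w i : ℝ)| / q ≤ B / q := by
    exact div_le_div_of_nonneg_right (hw i) hq0.le
  have h2 : (0:ℝ) ≤ rr p q ^ i * rr p q := by positivity
  calc |(w i : ℝ)| / q * (rr p q ^ i * rr p q)
      ≤ B / q * (rr p q ^ i * rr p q) := mul_le_mul_of_nonneg_right h1 h2
    _ = B / q * rr p q * rr p q ^ i := by ring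

lemma rho_eq_lim {w : ℕ → ℤ} {s : ℕ → ℕ} {B : ℝ} (hB : 0 ≤ B)
    (hw : ∀ k, |(w k : ℝ)| ≤ B)
    (hs : ∀ k, (q:ℤ) * s (k+1) = p * s k + w k) (hs0 : s 0 = 0) :
    Tendsto (fun N => (s N : ℝ) * rr p q ^ N) atTop (𝓝 (rho p q w)) := by
  have hsum := rho_summable hq hpq hB hw
  have hts := hsum.hasSum.tendsto_sum_nat
  have heq : ∀ N, ∑ i ∈ Finset.range N, ((w i : ℝ) / q) * rr p q ^ (i+1)
      = (s N : ℝ) * rr p q ^ N := by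
    intro N
    rw [partial_sum_eq hq hpq hs N, hs0]
    simp
  have hrho : rho p q w = ∑' i, ((w i : ℝ) / q) * rr p q ^ (i+1) := rfl
  rw [hrho]
  exact Tendsto.congr heq hts

end RhoLemmas

end S13

theorem stmt13 (p q : ℕ) (hco : Nat.Coprime p q) (hq : 1 < q) (hpq : q < p)
    (hsmall : p ≤ 2 * q - 1) :
    {x : ℝ | ∃ w : ℕ → ℤ, IsBranch p q (Ap p) 0 w ∧ x = rho p q w}
      = {x : ℝ | ∃ w : ℕ → ℤ, IsBranch p q (Dalph p q) 0 w ∧ x = rho p q w} := by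
  have hq0 : 0 < q := by omega
  have hp0 : 0 < p := by omega
  have hr0 := S13.rr_pos hq hpq
  have hr1 := S13.rr_lt_one hq hpq
  have hApD : Ap p ⊆ Dalph p q := by
    intro e he
    rw [Ap, Set.mem_Icc] at he
    rw [Dalph, Set.mem_Icc]
    have h2q : (p:ℤ) ≤ 2 * q - 1 := by
      have : p + 1 ≤ 2 * q := by omega
      have := (Nat.cast_le (α := ℤ)).mpr this
      push_cast at this
      omega
    exact ⟨by omega, he.2⟩
  ext x
  simp only [Set.mem_setOf_eq]
  constructor
  · rintro ⟨w, ⟨s, hs0, hstep⟩, rfl⟩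
    exact ⟨w, ⟨s, hs0, fun k => ⟨(hstep k).1, hApD (hstep k).2⟩⟩, rfl⟩
  · rintro ⟨w, ⟨s, hs0, hstep⟩, rfl⟩
    -- digit bounds
    have hwmem : ∀ k, (p:ℤ) - 2 * q + 1 ≤ w k ∧ w k ≤ (p:ℤ) - 1 := by
      intro k
      have := (hstep k).2
      rw [Dalph, Set.mem_Icc] at this
      exact this
    have hwabs : ∀ k, |(w k : ℝ)| ≤ ((2 * q : ℕ) : ℝ) := by
      intro k
      have h1 := (hwmem k).1
      have h2 := (hwmem k).2
      have h3 : |w k| ≤ (2 * q : ℤ) := by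
        rw [abs_le]
        constructor
        · have : (q:ℤ) < p := by exact_mod_cast hpq
          omega
        · have : (1:ℤ) ≤ p := by exact_mod_cast (show 1 ≤ p by omega)
          have hpz : (p:ℤ) ≤ 2 * q - 1 := by
            have h4 : p + 1 ≤ 2 * q := by omega
            have h5 := (Nat.cast_le (α := ℤ)).mpr h4
            push_cast at h5
            omega
          omega
      calc |(w k : ℝ)| = ((|w k| : ℤ) : ℝ) := by push_cast; rfl
        _ ≤ (((2 * q : ℕ) : ℤ) : ℝ) := by
            have : ((2 * q : ℕ) : ℤ) = 2 * q := by push_cast; ring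
            rw [this]
            exact_mod_cast h3
        _ = ((2 * q : ℕ) : ℝ) := by push_cast; ring
    have hB0 : (0:ℝ) ≤ ((2 * q : ℕ) : ℝ) := by positivity
    have hlim := S13.rho_eq_lim hq hpq hB0 hwabs (fun k => (hstep k).1) hs0
    set x := rho p q w with hxdef
    -- x is nonnegative
    have hx0 : 0 ≤ x := by
      refine le_of_tendsto_of_tendsto' tendsto_const_nhds hlim ?_
      intro n
      positivity
    -- states are below the max orbit
    have hsmax : ∀ k, s k ≤ S13.maxo p q 0 k := by
      intro k
      induction k with
      | zero => rw [hs0]; rfl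
      | succ k ih =>
        have heq := (hstep k).1
        have hwle := (hwmem k).2
        have hc : ((p * s k + p - 1 : ℕ) : ℤ) = (p : ℤ) * s k + p - 1 := by
          rw [Nat.cast_sub (show 1 ≤ p * s k + p by omega)]
          push_cast
          ring
        have hcast : ((q * s (k+1) : ℕ) : ℤ) ≤ ((p * s k + p - 1 : ℕ) : ℤ) := by
          rw [hc]
          push_cast
          linarith
        have h2 : q * s (k+1) ≤ p * s k + p - 1 := by exact_mod_cast hcast
        have h3 : s (k+1) ≤ S13.hi p q (s k) := by
          rw [S13.hi, Nat.le_div_iff_mul_le hq0]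
          calc s (k+1) * q = q * s (k+1) := by ring
            _ ≤ p * s k + p - 1 := h2
        calc s (k+1) ≤ S13.hi p q (s k) := h3
          _ ≤ S13.hi p q (S13.maxo p q 0 k) := S13.hi_mono ih
          _ = S13.maxo p q 0 (k+1) := rfl
    -- x ≤ vmax 0
    have hxL : x ≤ S13.vmax p q 0 := by
      refine le_of_tendsto_of_tendsto' hlim tendsto_const_nhds ?_
      intro k
      have h1 : (s k : ℝ) ≤ (S13.maxo p q 0 k : ℝ) := by exact_mod_cast hsmax k
      have h2 : (0:ℝ) ≤ S13.rr p q ^ k := by positivity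
      calc (s k : ℝ) * S13.rr p q ^ k
          ≤ (S13.maxo p q 0 k : ℝ) * S13.rr p q ^ k := mul_le_mul_of_nonneg_right h1 h2
        _ ≤ S13.vmax p q 0 := le_ciSup (S13.maxo_bddAbove hq hpq 0) k
    -- greedy branch
    set g := S13.greedy p q x with hg
    set w' : ℕ → ℤ := fun k => (q:ℤ) * g (k+1) - p * g k with hw'
    have htrans := fun k => S13.greedy_trans hq hpq x hx0 hxL k
    refine ⟨w', ⟨g, rfl, ?_⟩, ?_⟩
    · intro k
      refine ⟨by rw [hw']; ring, ?_⟩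
      rw [Ap, Set.mem_Icc]
      have h1 := (htrans k).1
      have h2 := (htrans k).2
      have h1' : ((p * g k : ℕ) : ℤ) ≤ ((q * g (k+1) : ℕ) : ℤ) := by exact_mod_cast h1
      have h2' : ((q * g (k+1) : ℕ) : ℤ) ≤ ((p * g k : ℕ) : ℤ) + p - 1 := by
        have hc : ((p * g k + p - 1 : ℕ) : ℤ) = ((p * g k : ℕ) : ℤ) + p - 1 := by
          have : 1 ≤ p * g k + p := by omega
          omega
        rw [← hc]
        exact_mod_cast h2
      constructor
      · rw [hw']
        push_cast at h1' ⊢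
        linarith
      · rw [hw']
        push_cast at h2' ⊢
        linarith
    · -- rho w = rho w'
      have hw'abs : ∀ k, |(w' k : ℝ)| ≤ ((p : ℕ) : ℝ) := by
        intro k
        have h1 := (htrans k).1
        have h2 := (htrans k).2
        have h1' : ((p * g k : ℕ) : ℤ) ≤ ((q * g (k+1) : ℕ) : ℤ) := by exact_mod_cast h1
        have h2' : ((q * g (k+1) : ℕ) : ℤ) ≤ ((p * g k : ℕ) : ℤ) + p - 1 := by
          have hc : ((p * g k + p - 1 : ℕ) : ℤ) = ((p * g k : ℕ) : ℤ) + p - 1 := by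
            have : 1 ≤ p * g k + p := by omega
            omega
          rw [← hc]
          exact_mod_cast h2
        have h1R : (p:ℝ) * (g k : ℝ) ≤ (q:ℝ) * (g (k+1) : ℝ) := by exact_mod_cast h1'
        have h2R : (q:ℝ) * (g (k+1) : ℝ) ≤ (p:ℝ) * (g k : ℝ) + (p:ℝ) - 1 := by
          exact_mod_cast h2'
        have hpr : (0:ℝ) ≤ (p:ℝ) := by positivity
        rw [abs_le]
        constructor
        · rw [hw']
          push_cast
          linarith
        · rw [hw']
          push_cast
          linarith
      have hp0' : (0:ℝ) ≤ ((p : ℕ) : ℝ) := by positivity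
      have hglim := S13.rho_eq_lim hq hpq (w := w') (s := g) hp0' hw'abs
        (fun k => by rw [hw']; ring) rfl
      have hxlim := S13.greedy_tendsto hq hpq x hx0 hxL
      have : rho p q w' = x := tendsto_nhds_unique hglim hxlim
      rw [this]
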